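/- Fix integers r ≥ 2, m ≥ 2, and 1 ≤ t ≤ 2^m − 1. Choose m_0 ∈ [m] with 2^{m_0−1} − 1 < t ≤ 2^{m_0} − 1, and set t_1 = 2^{m_0−1} − 1, t_2 = t − t_1 − 1, A = Ω_{t_1}^{(m)}, B = Ω_t^{(m)} \ A, and A_j = {α ∈ A : the m_0-th coordinate (from the right) of α equals j} for j ∈ Z_r. For j ∈ Z_{r+1}, let ψ_j : Z_{r+1}^{m−1} → Z_{r+1}^m be the map inserting j as the m_0-th coordinate from the right. Let C be a binary linear code with coordinates indexed by Ω_t^{(m)} whose codewords satisfy x_α = Σ_{β∈L^{(m)}(α)} x_β for all α ∈ Ω_t^{(m)}\Ω_0^{(m)}. Then: (1) for each j ∈ Z_r, ψ_j restricts to a bijection from Ω_{t_1}^{(m−1)} onto A_j, and every codeword x ∈ C satisfies x_{ψ_j(α)} = Σ_{β∈L^{(m−1)}(α)} x_{ψ_j(β)} for all α ∈ Ω_{t_1}^{(m−1)}\Ω_0^{(m−1)}; (2) if t_2 ≥ 1, then ψ_r restricts to a bijection from Ω_{t_2}^{(m−1)} onto B, and every codeword x ∈ C satisfies x_{ψ_r(α)}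 = Σ_{β∈L^{(m−1)}(α)} x_{ψ_r(β)} for all α ∈ Ω_{t_2}^{(m−1)}\Ω_0^{(m−1)}. -/

import Mathlib

open Finset

/-- `supp_m(s)`: the support of the `m`-digit binary representation of `s`,
with digit `ℓ` (0-indexed) corresponding to `2^ℓ`. -/
def suppm (m s : ℕ) : Finset (Fin m) :=
  Finset.univ.filter (fun ℓ => s.testBit ℓ.val)

/-- `U(α) = {ℓ ∈ [m] : α_ℓ = r}`, for `α ∈ Z_{r+1}^m`. -/
def Uset (r m : ℕ) (α : Fin m → Fin (r + 1)) : Finset (Fin m) :=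
  Finset.univ.filter (fun ℓ => (α ℓ : ℕ) = r)

/-- `L(α) = {β ∈ Z_r^m : β_ℓ = α_ℓ for all ℓ with α_ℓ < r}`, with
`Z_r ⊆ Z_{r+1}` viewed as the elements of value `< r`. -/
def Lset (r m : ℕ) (α : Fin m → Fin (r + 1)) : Finset (Fin m → Fin (r + 1)) :=
  Finset.univ.filter (fun β =>
    (∀ ℓ, (β ℓ : ℕ) < r) ∧ ∀ ℓ, (α ℓ : ℕ) < r → β ℓ = α ℓ)

/-- `Γ_s = {α ∈ Z_{r+1}^m : U(α) = supp_m(s)}`. -/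
def Gam (r m s : ℕ) : Finset (Fin m → Fin (r + 1)) :=
  Finset.univ.filter (fun α => Uset r m α = suppm m s)

/-- `Ω_t^{(m)} = ⋃_{s=0}^{t} Γ_s`. -/
def Omeg (r m t : ℕ) : Finset (Fin m → Fin (r + 1)) :=
  (Finset.range (t + 1)).biUnion (Gam r m)

/-- The coordinate index set `Ω_t^{(m)}` as a type. -/
abbrev OmegIdx (r m t : ℕ) : Type := {α : Fin m → Fin (r + 1) // α ∈ Omeg r m t}

/-- The columns of the row of `H_t^{(m)}` indexed by `α`, other than `α` itself:
the coordinates in `Ω_t^{(m)}` whose index lies in `L(α)`. -/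
def LIdx (r m t : ℕ) (α : Fin m → Fin (r + 1)) : Finset (OmegIdx r m t) :=
  Finset.univ.filter (fun β => β.1 ∈ Lset r m α)

/-- numerical value of the `r`-positions of `α` -/
def Nval (r m : ℕ) (α : Fin m → Fin (r + 1)) : ℕ :=
  ∑ ℓ ∈ Uset r m α, 2 ^ (ℓ : ℕ)

lemma mem_bitIndices_iff {n k : ℕ} : k ∈ n.bitIndices ↔ n.testBit k = true := by
  exact Nat.mem_bitIndices

lemma bitIndices_finset_sum (T : Finset ℕ) :
    (∑ i ∈ T, 2 ^ i).bitIndices = T.sort (· ≤ ·) := by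
  rw [← Nat.bitIndices_twoPowsum (L := T.sort (· ≤ ·)) (Finset.sortedLT_sort T)]
  congr 1
  rw [← Finset.sum_map_toList]
  exact List.Perm.sum_eq (((Finset.sort_perm_toList T _).map _).symm)

lemma nval_eq_sum_image (r m : ℕ) (α : Fin m → Fin (r + 1)) :
    Nval r m α = ∑ i ∈ (Uset r m α).image Fin.val, 2 ^ i := by
  rw [Finset.sum_image (fun a _ b _ h => Fin.val_injective h)]
  rfl

lemma uset_eq_suppm_nval (r m : ℕ) (α : Fin m → Fin (r + 1)) :
    Uset r m α = suppm m (Nval r m α) := by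
  have hb : (Nval r m α).bitIndices = ((Uset r m α).image Fin.val).sort (· ≤ ·) := by
    rw [nval_eq_sum_image]; exact bitIndices_finset_sum _
  ext ℓ
  simp only [suppm, Finset.mem_filter, Finset.mem_univ, true_and]
  rw [← mem_bitIndices_iff, hb, Finset.mem_sort, Finset.mem_image]
  constructor
  · exact fun h => ⟨ℓ, h, rfl⟩
  · rintro ⟨ℓ', h, h'⟩; rwa [← Fin.val_injective h']

lemma sum_suppm_le (m s : ℕ) : ∑ ℓ ∈ suppm m s, 2 ^ (ℓ : ℕ) ≤ s := by
  have h1 : ∑ ℓ ∈ suppm m s, 2 ^ (ℓ : ℕ) = ∑ i ∈ (suppm m s).image Fin.val, 2 ^ i := by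
    rw [Finset.sum_image (fun a _ b _ h => Fin.val_injective h)]
  have hnd : s.bitIndices.Nodup := Nat.bitIndices_sorted.nodup
  have h2 : (suppm m s).image Fin.val ⊆ s.bitIndices.toFinset := by
    intro i hi
    simp only [Finset.mem_image, suppm, Finset.mem_filter] at hi
    obtain ⟨ℓ, ⟨-, h⟩, rfl⟩ := hi
    exact List.mem_toFinset.mpr (mem_bitIndices_iff.mpr h)
  calc ∑ ℓ ∈ suppm m s, 2 ^ (ℓ : ℕ) ≤ ∑ i ∈ s.bitIndices.toFinset, 2 ^ i := by
        rw [h1]; exact Finset.sum_le_sum_of_subset h2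
    _ = (s.bitIndices.map (fun i => 2 ^ i)).sum := by
        rw [List.sum_toFinset _ hnd]
    _ = s := Nat.twoPowSum_bitIndices s

lemma mem_Omeg_iff {r m t : ℕ} {α : Fin m → Fin (r + 1)} :
    α ∈ Omeg r m t ↔ Nval r m α ≤ t := by
  constructor
  · intro h
    simp only [Omeg, Finset.mem_biUnion, Finset.mem_range, Gam, Finset.mem_filter,
      Finset.mem_univ, true_and] at h
    obtain ⟨s, hs, hU⟩ := h
    calc Nval r m α = ∑ ℓ ∈ suppm m s, 2 ^ (ℓ : ℕ) := by rw [Nval, hU]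
      _ ≤ s := sum_suppm_le m s
      _ ≤ t := by omega
  · intro h
    simp only [Omeg, Finset.mem_biUnion, Finset.mem_range, Gam, Finset.mem_filter,
      Finset.mem_univ, true_and]
    exact ⟨Nval r m α, by omega, uset_eq_suppm_nval r m α⟩

lemma succAbove_val {m : ℕ} (p : Fin (m + 1)) (ℓ : Fin m) :
    ((p.succAbove ℓ) : ℕ) = if (ℓ : ℕ) < (p : ℕ) then (ℓ : ℕ) else (ℓ : ℕ) + 1 := by
  split_ifs with h
  · rw [Fin.succAbove_of_castSucc_lt _ _ (by simpa [Fin.lt_def] using h)]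
    simp
  · rw [Fin.succAbove_of_le_castSucc _ _ (by simp [Fin.le_def]; omega)]
    simp

lemma sum_range_two_pow (k : ℕ) : ∑ i ∈ Finset.range k, 2 ^ i = 2 ^ k - 1 := by
  induction k with
  | zero => simp
  | succ k ih =>
    rw [Finset.sum_range_succ, ih]
    have h1 : 0 < 2 ^ k := Nat.pow_pos (by norm_num)
    have h2 : 2 ^ (k + 1) = 2 * 2 ^ k := by rw [pow_succ]; ring
    omega

lemma sum_pow_le_pred_iff {ι : Type*} (S : Finset ι) (f : ι → ℕ)
    (hinj : ∀ a ∈ S, ∀ b ∈ S, f a = f b → a = b) (k : ℕ) :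
    ∑ i ∈ S, 2 ^ (f i) ≤ 2 ^ k - 1 ↔ ∀ i ∈ S, f i < k := by
  constructor
  · intro h i hi
    by_contra hk
    push_neg at hk
    have h1 : 2 ^ k ≤ 2 ^ (f i) := Nat.pow_le_pow_right (by norm_num) hk
    have h2 : 2 ^ (f i) ≤ ∑ i ∈ S, 2 ^ (f i) :=
      Finset.single_le_sum (f := fun i => 2 ^ (f i)) (fun _ _ => Nat.zero_le _) hi
    have h3 : (0 : ℕ) < 2 ^ k := Nat.pow_pos (by norm_num)
    omega
  · intro h
    calc ∑ i ∈ S, 2 ^ (f i) = ∑ j ∈ S.image f, 2 ^ j := (Finset.sum_image hinj).symm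
      _ ≤ ∑ j ∈ Finset.range k, 2 ^ j := Finset.sum_le_sum_of_subset (by
          intro j hj
          simp only [Finset.mem_image] at hj
          obtain ⟨i, hi, rfl⟩ := hj
          exact Finset.mem_range.mpr (h i hi))
      _ = 2 ^ k - 1 := sum_range_two_pow k

lemma uset_insertNth_lt {r m : ℕ} {j : Fin (r + 1)} (hj : (j : ℕ) < r)
    (p : Fin (m + 1)) (α : Fin m → Fin (r + 1)) :
    Uset r (m + 1) (p.insertNth j α) = (Uset r m α).image p.succAbove := by
  ext ℓ
  simp only [Uset, Finset.mem_filter, Finset.mem_univ, true_and, Finset.mem_image]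
  rcases eq_or_ne ℓ p with rfl | h
  · rw [Fin.insertNth_apply_same]
    constructor
    · intro h'; omega
    · rintro ⟨i, -, hi⟩; exact absurd hi (Fin.succAbove_ne ℓ i)
  · obtain ⟨i, rfl⟩ := Fin.exists_succAbove_eq h
    rw [Fin.insertNth_apply_succAbove]
    constructor
    · intro h'; exact ⟨i, h', rfl⟩
    · rintro ⟨i', hi', hi''⟩
      rwa [← Fin.succAbove_right_injective.eq_iff (a := i') (b := i) |>.mp hi'']

lemma uset_insertNth_last {r m : ℕ} (p : Fin (m + 1)) (α : Fin m → Fin (r + 1)) :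
    Uset r (m + 1) (p.insertNth (Fin.last r) α) = insert p ((Uset r m α).image p.succAbove) := by
  ext ℓ
  simp only [Uset, Finset.mem_filter, Finset.mem_univ, true_and, Finset.mem_image,
    Finset.mem_insert]
  rcases eq_or_ne ℓ p with rfl | h
  · rw [Fin.insertNth_apply_same]
    simp [Fin.last]
  · obtain ⟨i, rfl⟩ := Fin.exists_succAbove_eq h
    rw [Fin.insertNth_apply_succAbove]
    constructor
    · intro h'; exact Or.inr ⟨i, h', rfl⟩
    · rintro (h' | ⟨i', hi', hi''⟩)
      · exact absurd h' h
      · rwa [← Fin.succAbove_right_injective.eq_iff (a := i') (b := i) |>.mp hi'']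

lemma nval_insertNth_lt {r m : ℕ} {j : Fin (r + 1)} (hj : (j : ℕ) < r)
    (p : Fin (m + 1)) (α : Fin m → Fin (r + 1)) :
    Nval r (m + 1) (p.insertNth j α) = ∑ ℓ ∈ Uset r m α, 2 ^ ((p.succAbove ℓ : Fin (m + 1)) : ℕ) := by
  rw [Nval, uset_insertNth_lt hj]
  exact Finset.sum_image (fun a _ b _ h => Fin.succAbove_right_injective h)

lemma nval_insertNth_last {r m : ℕ} (p : Fin (m + 1)) (α : Fin m → Fin (r + 1)) :
    Nval r (m + 1) (p.insertNth (Fin.last r) α) =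
      2 ^ (p : ℕ) + ∑ ℓ ∈ Uset r m α, 2 ^ ((p.succAbove ℓ : Fin (m + 1)) : ℕ) := by
  rw [Nval, uset_insertNth_last, Finset.sum_insert (by
    simp only [Finset.mem_image]
    rintro ⟨i, -, hi⟩
    exact Fin.succAbove_ne p i hi)]
  congr 1
  exact Finset.sum_image (fun a _ b _ h => Fin.succAbove_right_injective h)

lemma succAbove_val_lt_iff {m : ℕ} (p : Fin (m + 1)) (ℓ : Fin m) :
    ((p.succAbove ℓ : Fin (m + 1)) : ℕ) < (p : ℕ) ↔ (ℓ : ℕ) < (p : ℕ) := by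
  rw [succAbove_val]; split_ifs with h <;> omega

lemma sum_succAbove_eq {r m : ℕ} (p : Fin (m + 1)) (α : Fin m → Fin (r + 1))
    (hall : ∀ ℓ ∈ Uset r m α, (ℓ : ℕ) < (p : ℕ)) :
    ∑ ℓ ∈ Uset r m α, 2 ^ ((p.succAbove ℓ : Fin (m + 1)) : ℕ) = Nval r m α := by
  refine Finset.sum_congr rfl (fun ℓ hℓ => ?_)
  rw [succAbove_val, if_pos (hall ℓ hℓ)]

lemma succAbove_inj' {m : ℕ} (p : Fin (m + 1)) :
    ∀ a ∈ (Finset.univ : Finset (Fin m)), ∀ b ∈ Finset.univ,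
      ((p.succAbove a : Fin (m + 1)) : ℕ) = ((p.succAbove b : Fin (m + 1)) : ℕ) → a = b :=
  fun a _ b _ h => Fin.succAbove_right_injective (Fin.val_injective h)

lemma nval_le_pred_iff {r m : ℕ} (α : Fin m → Fin (r + 1)) (k : ℕ) :
    Nval r m α ≤ 2 ^ k - 1 ↔ ∀ ℓ ∈ Uset r m α, (ℓ : ℕ) < k :=
  sum_pow_le_pred_iff _ _ (fun a _ b _ h => Fin.val_injective h) k

/-- part-1 membership transfer -/
lemma key1 {r m : ℕ} {j : Fin (r + 1)} (hj : (j : ℕ) < r)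
    (p : Fin (m + 1)) (α : Fin m → Fin (r + 1)) :
    p.insertNth j α ∈ Omeg r (m + 1) (2 ^ (p : ℕ) - 1) ↔ α ∈ Omeg r m (2 ^ (p : ℕ) - 1) := by
  rw [mem_Omeg_iff, mem_Omeg_iff, nval_insertNth_lt hj, nval_le_pred_iff,
    sum_pow_le_pred_iff _ _ (fun a ha b hb h => succAbove_inj' p a (Finset.mem_univ a) b
      (Finset.mem_univ b) h) _]
  exact forall₂_congr (fun ℓ _ => succAbove_val_lt_iff p ℓ)

/-- part-2 membership transfer -/
lemma key2 {r m t : ℕ} (p : Fin (m + 1)) (α : Fin m → Fin (r + 1))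
    (hpt : 2 ^ (p : ℕ) ≤ t) (hpt' : t ≤ 2 ^ ((p : ℕ) + 1) - 1) :
    p.insertNth (Fin.last r) α ∈ Omeg r (m + 1) t ↔ α ∈ Omeg r m (t - 2 ^ (p : ℕ)) := by
  rw [mem_Omeg_iff, mem_Omeg_iff, nval_insertNth_last]
  have hpow : 2 ^ ((p : ℕ) + 1) = 2 * 2 ^ (p : ℕ) := by rw [pow_succ]; ring
  have hpos : 0 < 2 ^ (p : ℕ) := Nat.pow_pos (by norm_num)
  constructor
  · intro h
    have hS : ∑ ℓ ∈ Uset r m α, 2 ^ ((p.succAbove ℓ : Fin (m + 1)) : ℕ) ≤ 2 ^ (p : ℕ) - 1 := by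
      omega
    have hall : ∀ ℓ ∈ Uset r m α, (ℓ : ℕ) < (p : ℕ) := by
      intro ℓ hℓ
      rw [← succAbove_val_lt_iff p ℓ]
      exact (sum_pow_le_pred_iff _ _ (fun a ha b hb h' => succAbove_inj' p a (Finset.mem_univ a)
        b (Finset.mem_univ b) h') _).mp hS ℓ hℓ
    rw [← sum_succAbove_eq p α hall]
    omega
  · intro h
    have hle : Nval r m α ≤ 2 ^ (p : ℕ) - 1 := by omega
    have hall : ∀ ℓ ∈ Uset r m α, (ℓ : ℕ) < (p : ℕ) := (nval_le_pred_iff α _).mp hle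
    rw [sum_succAbove_eq p α hall]
    omega

lemma key2' {r m : ℕ} (p : Fin (m + 1)) (α : Fin m → Fin (r + 1)) :
    p.insertNth (Fin.last r) α ∉ Omeg r (m + 1) (2 ^ (p : ℕ) - 1) := by
  rw [mem_Omeg_iff, nval_insertNth_last]
  have hpos : 0 < 2 ^ (p : ℕ) := Nat.pow_pos (by norm_num)
  omega

lemma mem_Omeg_zero_iff {r m : ℕ} {α : Fin m → Fin (r + 1)} :
    α ∈ Omeg r m 0 ↔ ∀ ℓ, (α ℓ : ℕ) < r := by
  rw [mem_Omeg_iff, Nat.le_zero, Nval, Finset.sum_eq_zero_iff]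
  constructor
  · intro h ℓ
    by_contra hc
    push_neg at hc
    have hℓ : ℓ ∈ Uset r m α := by
      simp only [Uset, Finset.mem_filter, Finset.mem_univ, true_and]
      have := (α ℓ).isLt; omega
    exact absurd (h ℓ hℓ) (by positivity)
  · intro h ℓ hℓ
    simp only [Uset, Finset.mem_filter, Finset.mem_univ, true_and] at hℓ
    exact absurd hℓ (by have := h ℓ; omega)

lemma insertNth_inj {r m : ℕ} (p : Fin (m + 1)) (j : Fin (r + 1))
    {γ₁ γ₂ : Fin m → Fin (r + 1)}
    (h : (p.insertNth j γ₁ : Fin (m + 1) → Fin (r + 1)) =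
      Fin.insertNth (α := fun _ => Fin (r + 1)) p j γ₂) : γ₁ = γ₂ := by
  funext i
  have h2 := congrFun h (p.succAbove i)
  rwa [Fin.insertNth_apply_succAbove, Fin.insertNth_apply_succAbove] at h2

lemma lset_insertNth_lt {r m : ℕ} {j : Fin (r + 1)} (hj : (j : ℕ) < r)
    (p : Fin (m + 1)) (α : Fin m → Fin (r + 1)) :
    Lset r (m + 1) (p.insertNth j α) = (Lset r m α).image (fun γ => p.insertNth j γ) := by
  ext β
  simp only [Lset, Finset.mem_filter, Finset.mem_univ, true_and, Finset.mem_image]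
  constructor
  · rintro ⟨h1, h2⟩
    refine ⟨p.removeNth β, ⟨fun i => h1 _, fun i hi => ?_⟩, ?_⟩
    · have := h2 (p.succAbove i) (by rwa [Fin.insertNth_apply_succAbove])
      rwa [Fin.insertNth_apply_succAbove] at this
    · have hp : β p = j := by
        have := h2 p (by rw [Fin.insertNth_apply_same]; exact hj)
        rwa [Fin.insertNth_apply_same] at this
      calc p.insertNth j (p.removeNth β) = p.insertNth (β p) (p.removeNth β) := by rw [hp]
        _ = β := Fin.insertNth_self_removeNth p β
  · rintro ⟨γ, ⟨h1, h2⟩, rfl⟩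
    constructor
    · intro ℓ
      rcases eq_or_ne ℓ p with rfl | h
      · rwa [Fin.insertNth_apply_same]
      · obtain ⟨i, rfl⟩ := Fin.exists_succAbove_eq h
        rw [Fin.insertNth_apply_succAbove]; exact h1 i
    · intro ℓ hℓ
      rcases eq_or_ne ℓ p with rfl | h
      · rw [Fin.insertNth_apply_same, Fin.insertNth_apply_same]
      · obtain ⟨i, rfl⟩ := Fin.exists_succAbove_eq h
        rw [Fin.insertNth_apply_succAbove] at hℓ ⊢
        rw [Fin.insertNth_apply_succAbove]
        exact h2 i hℓ

lemma lset_insertNth_last {r m : ℕ} (p : Fin (m + 1)) (α : Fin m → Fin (r + 1)) :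
    Lset r (m + 1) (p.insertNth (Fin.last r) α) =
      (Finset.univ.filter (fun c : Fin (r + 1) => (c : ℕ) < r)).biUnion
        (fun c => (Lset r m α).image (fun γ => p.insertNth c γ)) := by
  ext β
  simp only [Lset, Finset.mem_filter, Finset.mem_univ, true_and, Finset.mem_image,
    Finset.mem_biUnion]
  constructor
  · rintro ⟨h1, h2⟩
    refine ⟨β p, h1 p, p.removeNth β, ⟨fun i => h1 _, fun i hi => ?_⟩, ?_⟩
    · have := h2 (p.succAbove i) (by rwa [Fin.insertNth_apply_succAbove])
      rwa [Fin.insertNth_apply_succAbove] at this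
    · exact Fin.insertNth_self_removeNth p β
  · rintro ⟨c, hc, γ, ⟨h1, h2⟩, rfl⟩
    constructor
    · intro ℓ
      rcases eq_or_ne ℓ p with rfl | h
      · rwa [Fin.insertNth_apply_same]
      · obtain ⟨i, rfl⟩ := Fin.exists_succAbove_eq h
        rw [Fin.insertNth_apply_succAbove]; exact h1 i
    · intro ℓ hℓ
      rcases eq_or_ne ℓ p with rfl | h
      · rw [Fin.insertNth_apply_same] at hℓ
        simp [Fin.last] at hℓ
      · obtain ⟨i, rfl⟩ := Fin.exists_succAbove_eq h
        rw [Fin.insertNth_apply_succAbove] at hℓ ⊢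
        rw [Fin.insertNth_apply_succAbove]
        exact h2 i hℓ

lemma lset_of_low {r m : ℕ} {γ : Fin m → Fin (r + 1)} (h : ∀ ℓ, (γ ℓ : ℕ) < r) :
    Lset r m γ = {γ} := by
  ext β
  simp only [Lset, Finset.mem_filter, Finset.mem_univ, true_and, Finset.mem_singleton]
  constructor
  · rintro ⟨h1, h2⟩
    funext ℓ
    exact h2 ℓ (h ℓ)
  · rintro rfl
    exact ⟨h, fun _ _ => rfl⟩

lemma mem_lset_low {r m : ℕ} {α β : Fin m → Fin (r + 1)} (h : β ∈ Lset r m α) :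
    ∀ ℓ, (β ℓ : ℕ) < r := by
  simp only [Lset, Finset.mem_filter] at h
  exact h.2.1

lemma nval_of_low {r m : ℕ} {β : Fin m → Fin (r + 1)} (h : ∀ ℓ, (β ℓ : ℕ) < r) :
    Nval r m β = 0 := by
  rw [Nval]
  apply Finset.sum_eq_zero
  intro ℓ hℓ
  simp only [Uset, Finset.mem_filter, Finset.mem_univ, true_and] at hℓ
  exact absurd hℓ (by have := h ℓ; omega)

lemma mem_Omeg_of_low {r m t : ℕ} {β : Fin m → Fin (r + 1)} (h : ∀ ℓ, (β ℓ : ℕ) < r) :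
    β ∈ Omeg r m t := by
  rw [mem_Omeg_iff, nval_of_low h]
  exact Nat.zero_le t

/-- extend a coordinate `x` on `Ω_t` by zero -/
def yext {r m t : ℕ} (x : OmegIdx r m t → ZMod 2) (a : Fin m → Fin (r + 1)) : ZMod 2 :=
  if h : a ∈ Omeg r m t then x ⟨a, h⟩ else 0

lemma sum_filter_eq {r m t : ℕ} (x : OmegIdx r m t → ZMod 2)
    (S : Finset (Fin m → Fin (r + 1))) (hS : ∀ a ∈ S, a ∈ Omeg r m t) :
    ∑ β ∈ Finset.univ.filter (fun β : OmegIdx r m t => β.1 ∈ S), x β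
      = ∑ a ∈ S, yext x a := by
  refine Finset.sum_bij (fun β _ => β.1) ?_ ?_ ?_ ?_
  · intro β hβ
    simpa using (Finset.mem_filter.mp hβ).2
  · intro a _ b _ h
    exact Subtype.ext h
  · intro b hb
    exact ⟨⟨b, hS b hb⟩, Finset.mem_filter.mpr ⟨Finset.mem_univ _, hb⟩, rfl⟩
  · intro β hβ
    rw [yext, dif_pos β.2]

lemma uset_empty_of_low {r m : ℕ} {γ : Fin m → Fin (r + 1)} (h : ∀ ℓ, (γ ℓ : ℕ) < r) :
    Uset r m γ = ∅ := by
  rw [Uset, Finset.filter_eq_empty_iff]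
  intro ℓ _
  have := h ℓ; omega

lemma low_insertNth {r m : ℕ} {j : Fin (r + 1)} (hj : (j : ℕ) < r) (p : Fin (m + 1))
    {γ : Fin m → Fin (r + 1)} (hγ : ∀ ℓ, (γ ℓ : ℕ) < r) :
    ∀ ℓ, ((p.insertNth j γ : Fin (m + 1) → Fin (r + 1)) ℓ : ℕ) < r := by
  intro ℓ
  rcases eq_or_ne ℓ p with rfl | h
  · rwa [Fin.insertNth_apply_same]
  · obtain ⟨i, rfl⟩ := Fin.exists_succAbove_eq h
    rw [Fin.insertNth_apply_succAbove]; exact hγ i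

lemma insertNth_last_mem_Omeg {r m t : ℕ} (p : Fin (m + 1)) {γ : Fin m → Fin (r + 1)}
    (hγ : ∀ ℓ, (γ ℓ : ℕ) < r) (hqt : 2 ^ (p : ℕ) ≤ t) :
    p.insertNth (Fin.last r) γ ∈ Omeg r (m + 1) t := by
  rw [mem_Omeg_iff, nval_insertNth_last, uset_empty_of_low hγ]
  simpa using hqt

lemma insertNth_last_not_mem_Omeg_zero {r m : ℕ} (hr : 1 ≤ r) (p : Fin (m + 1))
    (γ : Fin m → Fin (r + 1)) :
    p.insertNth (Fin.last r) γ ∉ Omeg r (m + 1) 0 := by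
  rw [mem_Omeg_zero_iff]
  push_neg
  exact ⟨p, by rw [Fin.insertNth_apply_same]; simp [Fin.last]⟩

lemma disj_images {r m : ℕ} (p : Fin (m + 1)) (S : Finset (Fin m → Fin (r + 1))) :
    Set.PairwiseDisjoint
      ↑(Finset.univ.filter (fun c : Fin (r + 1) => (c : ℕ) < r))
      (fun c => S.image (fun γ => (p.insertNth c γ : Fin (m + 1) → Fin (r + 1)))) := by
  intro c1 _ c2 _ hne
  simp only [Function.onFun]
  rw [Finset.disjoint_left]
  rintro b hb1 hb2
  simp only [Finset.mem_image] at hb1 hb2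
  obtain ⟨γ1, -, rfl⟩ := hb1
  obtain ⟨γ2, -, h2⟩ := hb2
  apply hne
  have := congrFun h2 p
  rw [Fin.insertNth_apply_same, Fin.insertNth_apply_same] at this
  exact this.symm

lemma high_coord {r m t : ℕ} (p : Fin (m + 1)) (b : Fin (m + 1) → Fin (r + 1))
    (hb1 : b ∈ Omeg r (m + 1) t) (hb2 : b ∉ Omeg r (m + 1) (2 ^ (p : ℕ) - 1))
    (ht : t ≤ 2 ^ ((p : ℕ) + 1) - 1) : b p = Fin.last r := by
  rw [mem_Omeg_iff] at hb1
  rw [mem_Omeg_iff, nval_le_pred_iff] at hb2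
  push_neg at hb2
  obtain ⟨ℓ, hℓ, hℓp⟩ := hb2
  have h1 : 2 ^ (ℓ : ℕ) ≤ Nval r (m + 1) b :=
    Finset.single_le_sum (f := fun ℓ : Fin (m + 1) => 2 ^ (ℓ : ℕ))
      (fun _ _ => Nat.zero_le _) hℓ
  have h2 : (ℓ : ℕ) < (p : ℕ) + 1 := by
    by_contra hc
    push_neg at hc
    have : 2 ^ ((p : ℕ) + 1) ≤ 2 ^ (ℓ : ℕ) := Nat.pow_le_pow_right (by norm_num) hc
    have hpos : 0 < 2 ^ ((p : ℕ) + 1) := Nat.pow_pos (by norm_num)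
    omega
  have h3 : ℓ = p := Fin.val_injective (by omega)
  subst h3
  simp only [Uset, Finset.mem_filter, Finset.mem_univ, true_and] at hℓ
  exact Fin.ext (by simpa [Fin.last] using hℓ)

section parity

variable {r m t : ℕ} (C : Submodule (ZMod 2) (OmegIdx r (m + 1) t → ZMod 2))
  (hC : ∀ x ∈ C, ∀ α : OmegIdx r (m + 1) t, α.1 ∉ Omeg r (m + 1) 0 →
      x α = ∑ β ∈ Finset.univ.filter
        (fun β : OmegIdx r (m + 1) t => β.1 ∈ Lset r (m + 1) α.1), x β)

include hC in
lemma yext_parity (x : OmegIdx r (m + 1) t → ZMod 2) (hx : x ∈ C)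
    (a : Fin (m + 1) → Fin (r + 1)) (ha : a ∈ Omeg r (m + 1) t)
    (ha0 : a ∉ Omeg r (m + 1) 0) :
    yext x a = ∑ b ∈ Lset r (m + 1) a, yext x b := by
  rw [yext, dif_pos ha, hC x hx ⟨a, ha⟩ ha0]
  exact sum_filter_eq x _ (fun b hb => mem_Omeg_of_low (mem_lset_low hb))

include hC in
lemma yext_last_step (hr : 1 ≤ r) (p : Fin (m + 1)) (hqt : 2 ^ (p : ℕ) ≤ t)
    (x : OmegIdx r (m + 1) t → ZMod 2) (hx : x ∈ C)
    {γ : Fin m → Fin (r + 1)} (hγ : ∀ ℓ, (γ ℓ : ℕ) < r) :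
    yext x (p.insertNth (Fin.last r) γ)
      = ∑ c ∈ Finset.univ.filter (fun c : Fin (r + 1) => (c : ℕ) < r),
          yext x (p.insertNth c γ) := by
  rw [yext_parity C hC x hx _ (insertNth_last_mem_Omeg p hγ hqt)
      (insertNth_last_not_mem_Omeg_zero hr p γ),
    lset_insertNth_last, Finset.sum_biUnion (disj_images p _)]
  refine Finset.sum_congr rfl (fun c _ => ?_)
  rw [lset_of_low hγ, Finset.image_singleton, Finset.sum_singleton]

include hC in
lemma parity_part1 {j : Fin (r + 1)} (hj : (j : ℕ) < r) (p : Fin (m + 1))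
    (x : OmegIdx r (m + 1) t → ZMod 2) (hx : x ∈ C)
    {α : Fin m → Fin (r + 1)} (hα0 : α ∉ Omeg r m 0)
    (hmem : p.insertNth j α ∈ Omeg r (m + 1) t) :
    x ⟨p.insertNth j α, hmem⟩ =
      ∑ β ∈ Finset.univ.filter (fun β : OmegIdx r (m + 1) t =>
          β.1 ∈ (Lset r m α).image (fun γ => p.insertNth j γ)), x β := by
  have h0 : p.insertNth j α ∉ Omeg r (m + 1) 0 := by
    rw [mem_Omeg_zero_iff] at hα0 ⊢
    push_neg at hα0 ⊢
    obtain ⟨ℓ, hℓ⟩ := hα0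
    exact ⟨p.succAbove ℓ, by rwa [Fin.insertNth_apply_succAbove]⟩
  have h1 : x ⟨p.insertNth j α, hmem⟩ = yext x (p.insertNth j α) := by
    rw [yext, dif_pos hmem]
  rw [h1, yext_parity C hC x hx _ hmem h0, lset_insertNth_lt hj,
    sum_filter_eq x _ (fun a ha => ?_)]
  simp only [Finset.mem_image] at ha
  obtain ⟨γ, hγ, rfl⟩ := ha
  exact mem_Omeg_of_low (low_insertNth hj p (mem_lset_low hγ))

include hC in
lemma parity_part2 (hr : 1 ≤ r) (p : Fin (m + 1)) (hqt : 2 ^ (p : ℕ) ≤ t)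
    (x : OmegIdx r (m + 1) t → ZMod 2) (hx : x ∈ C)
    {α : Fin m → Fin (r + 1)}
    (hmem : p.insertNth (Fin.last r) α ∈ Omeg r (m + 1) t) :
    x ⟨p.insertNth (Fin.last r) α, hmem⟩ =
      ∑ β ∈ Finset.univ.filter (fun β : OmegIdx r (m + 1) t =>
          β.1 ∈ (Lset r m α).image (fun γ => p.insertNth (Fin.last r) γ)), x β := by
  have h1 : x ⟨p.insertNth (Fin.last r) α, hmem⟩ = yext x (p.insertNth (Fin.last r) α) := by
    rw [yext, dif_pos hmem]
  have hinj : ∀ (c : Fin (r + 1)), ∀ a ∈ Lset r m α, ∀ b ∈ Lset r m α,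
      (p.insertNth c a : Fin (m + 1) → Fin (r + 1)) = p.insertNth c b → a = b :=
    fun c a _ b _ h => insertNth_inj p c h
  rw [h1, yext_parity C hC x hx _ hmem
      (insertNth_last_not_mem_Omeg_zero hr p α),
    lset_insertNth_last, Finset.sum_biUnion (disj_images p _)]
  have h2 : ∀ c ∈ Finset.univ.filter (fun c : Fin (r + 1) => (c : ℕ) < r),
      ∑ b ∈ (Lset r m α).image (fun γ => (p.insertNth c γ : Fin (m + 1) → Fin (r + 1))),
        yext x b = ∑ γ ∈ Lset r m α, yext x (p.insertNth c γ) :=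
    fun c _ => Finset.sum_image (hinj c)
  rw [Finset.sum_congr rfl h2, Finset.sum_comm]
  have h3 : ∀ γ ∈ Lset r m α,
      ∑ c ∈ Finset.univ.filter (fun c : Fin (r + 1) => (c : ℕ) < r),
        yext x (p.insertNth c γ) = yext x (p.insertNth (Fin.last r) γ) :=
    fun γ hγ => (yext_last_step C hC hr p hqt x hx (mem_lset_low hγ)).symm
  rw [Finset.sum_congr rfl h3,
    sum_filter_eq x ((Lset r m α).image (fun γ => p.insertNth (Fin.last r) γ))
      (fun a ha => ?_), Finset.sum_image (hinj (Fin.last r))]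
  simp only [Finset.mem_image] at ha
  obtain ⟨γ, hγ, rfl⟩ := ha
  exact insertNth_last_mem_Omeg p (mem_lset_low hγ) hqt

end parity

/-- Lemma 6 (puncturing lemma), stated for total dimension `m + 1 ≥ 2` (i.e. the
paper's `m ≥ 2` with `m := m + 1`). Here `p : Fin (m+1)` is the (0-indexed from the
right) position `m₀ - 1`, `t₁ = 2^p - 1` and `t₂ = t - t₁ - 1`; `ψ_j` is
`Fin.insertNth p j`, insertion of `j` at position `p`;
`A = Ω_{t₁}^{(m+1)}`, `B = Ω_t^{(m+1)} \ A`, and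
`A_j = {α ∈ A : α_p = j}` for `j ∈ Z_r`. -/
theorem punctured_parity (r m t : ℕ) (hr : 2 ≤ r) (hm : 1 ≤ m)
    (ht1 : 1 ≤ t) (ht2 : t ≤ 2 ^ (m + 1) - 1)
    (p : Fin (m + 1)) (hp1 : 2 ^ (p : ℕ) - 1 < t) (hp2 : t ≤ 2 ^ ((p : ℕ) + 1) - 1)
    (C : Submodule (ZMod 2) (OmegIdx r (m + 1) t → ZMod 2))
    (hC : ∀ x ∈ C, ∀ α : OmegIdx r (m + 1) t, α.1 ∉ Omeg r (m + 1) 0 →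
      x α = ∑ β ∈ LIdx r (m + 1) t α.1, x β) :
    (∀ j : Fin (r + 1), (j : ℕ) < r →
      (Set.BijOn (fun α : Fin m → Fin (r + 1) => p.insertNth j α)
        ↑(Omeg r m (2 ^ (p : ℕ) - 1))
        (((Omeg r (m + 1) (2 ^ (p : ℕ) - 1)).filter (fun α => α p = j) :
          Finset (Fin (m + 1) → Fin (r + 1))) : Set (Fin (m + 1) → Fin (r + 1))) ∧
      ∀ x ∈ C, ∀ α ∈ Omeg r m (2 ^ (p : ℕ) - 1), α ∉ Omeg r m 0 →
        ∀ hmem : p.insertNth j α ∈ Omeg r (m + 1) t,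
          x ⟨p.insertNth j α, hmem⟩ =
            ∑ β ∈ Finset.univ.filter (fun β : OmegIdx r (m + 1) t =>
                β.1 ∈ (Lset r m α).image (fun γ => p.insertNth j γ)), x β)) ∧
    (1 ≤ t - (2 ^ (p : ℕ) - 1) - 1 →
      (Set.BijOn (fun α : Fin m → Fin (r + 1) => p.insertNth (Fin.last r) α)
        ↑(Omeg r m (t - (2 ^ (p : ℕ) - 1) - 1))
        ((Omeg r (m + 1) t \ Omeg r (m + 1) (2 ^ (p : ℕ) - 1) :
          Finset (Fin (m + 1) → Fin (r + 1))) : Set (Fin (m + 1) → Fin (r + 1))) ∧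
      ∀ x ∈ C, ∀ α ∈ Omeg r m (t - (2 ^ (p : ℕ) - 1) - 1), α ∉ Omeg r m 0 →
        ∀ hmem : p.insertNth (Fin.last r) α ∈ Omeg r (m + 1) t,
          x ⟨p.insertNth (Fin.last r) α, hmem⟩ =
            ∑ β ∈ Finset.univ.filter (fun β : OmegIdx r (m + 1) t =>
                β.1 ∈ (Lset r m α).image (fun γ => p.insertNth (Fin.last r) γ)), x β)) := by
  have hq1 : 0 < 2 ^ (p : ℕ) := Nat.pow_pos (by norm_num)
  have hqt : 2 ^ (p : ℕ) ≤ t := by omega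
  constructor
  · intro j hj
    constructor
    · refine ⟨?_, ?_, ?_⟩
      · intro a ha
        simp only [Finset.mem_coe] at ha
        simp only [Finset.coe_filter, Set.mem_setOf_eq]
        exact ⟨(key1 hj p a).mpr ha, Fin.insertNth_apply_same (α := fun _ => Fin (r + 1)) p j a⟩
      · intro a _ b _ h
        exact insertNth_inj p j h
      · intro b hb
        simp only [Finset.coe_filter, Set.mem_setOf_eq] at hb
        obtain ⟨hb1, hb2⟩ := hb
        have heq : (p.insertNth j (p.removeNth b) : Fin (m + 1) → Fin (r + 1)) = b := by
          rw [← hb2]; exact Fin.insertNth_self_removeNth p b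
        refine ⟨p.removeNth b, ?_, heq⟩
        simp only [Finset.mem_coe]
        exact (key1 hj p _).mp (by rw [heq]; exact hb1)
    · intro x hx α _ hα0 hmem
      exact parity_part1 C hC hj p x hx hα0 hmem
  · intro _
    have ht2eq : t - (2 ^ (p : ℕ) - 1) - 1 = t - 2 ^ (p : ℕ) := by omega
    rw [ht2eq]
    constructor
    · refine ⟨?_, ?_, ?_⟩
      · intro a ha
        simp only [Finset.mem_coe] at ha
        simp only [Finset.coe_sdiff, Set.mem_diff, Finset.mem_coe]
        exact ⟨(key2 p a hqt hp2).mpr ha, key2' p a⟩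
      · intro a _ b _ h
        exact insertNth_inj p (Fin.last r) h
      · intro b hb
        simp only [Finset.coe_sdiff, Set.mem_diff, Finset.mem_coe] at hb
        obtain ⟨hb1, hb2⟩ := hb
        have hbp : b p = Fin.last r := high_coord p b hb1 hb2 hp2
        have heq : (p.insertNth (Fin.last r) (p.removeNth b) : Fin (m + 1) → Fin (r + 1)) = b := by
          rw [← hbp]; exact Fin.insertNth_self_removeNth p b
        refine ⟨p.removeNth b, ?_, heq⟩
        simp only [Finset.mem_coe]
        exact (key2 p _ hqt hp2).mp (by rw [heq]; exact hb1)
    · intro x hx α _ hα0 hmem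
      exact parity_part2 C hC (by omega) p hqt x hx hmem
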